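/- The quantity y_k = ∑_{l=2}^∞ l·c(l,k) satisfies y_k = O(ln k / k^2); precisely, there is a constant C > 0 such that 0 ≤ y_k ≤ C·ln k / k^2 for all integers k ≥ 2. -/

import Mathlib

open scoped Classical

/-- The constants `c(l,k)`: `c(l,0) = c(0,k) = 0`,
`c(1,k) = (2k²+14k)/((k+1)(k+2)(k+3)(k+4))` for `k ≥ 1`, and for `l > 1`, `k > 0`,
`c(l,k) = c(l,k-1)·(l+k-1)/(2l+k+2) + c(l-1,k)·(l-1)/(2l+k+2)`. -/
noncomputable def c : ℕ → ℕ → ℝ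
  | _, 0 => 0
  | 0, _ => 0
  | 1, k + 1 =>
      (2 * ((k : ℝ) + 1) ^ 2 + 14 * ((k : ℝ) + 1)) /
        (((k : ℝ) + 2) * ((k : ℝ) + 3) * ((k : ℝ) + 4) * ((k : ℝ) + 5))
  | l + 2, k + 1 =>
      c (l + 2) k * ((l : ℝ) + (k : ℝ) + 2) / (2 * (l : ℝ) + (k : ℝ) + 7) +
      c (l + 1) (k + 1) * ((l : ℝ) + 1) / (2 * (l : ℝ) + (k : ℝ) + 7)
termination_by l k => (l, k)

lemma c_zero_right (l : ℕ) : c l 0 = 0 := by cases l <;> simp [c]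

lemma c_one (k : ℕ) : c 1 (k+1) = (2 * ((k : ℝ) + 1) ^ 2 + 14 * ((k : ℝ) + 1)) /
    (((k : ℝ) + 2) * ((k : ℝ) + 3) * ((k : ℝ) + 4) * ((k : ℝ) + 5)) := by rw [c]

lemma c_rec (t k : ℕ) : c (t+2) (k+1) =
    c (t + 2) k * ((t : ℝ) + (k : ℝ) + 2) / (2 * (t : ℝ) + (k : ℝ) + 7) +
    c (t + 1) (k + 1) * ((t : ℝ) + 1) / (2 * (t : ℝ) + (k : ℝ) + 7) := by rw [c]

lemma c_nonneg : ∀ l k, 0 ≤ c l k := by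
  intro l
  induction l with
  | zero => intro k; cases k <;> simp [c]
  | succ n ih =>
    intro k
    induction k with
    | zero => simp [c_zero_right]
    | succ k ihk =>
      rcases n with _ | m
      · rw [c_one]; positivity
      · rw [c_rec]
        have h1 : 0 ≤ c (m + 2) k := ihk
        have h2 : 0 ≤ c (m + 1) (k + 1) := ih (k+1)
        have hm : (0:ℝ) ≤ (m:ℝ) := Nat.cast_nonneg m
        have hk : (0:ℝ) ≤ (k:ℝ) := Nat.cast_nonneg k
        positivity

lemma c_one_le (k : ℕ) : c 1 (k+1) ≤ 16 / ((k:ℝ)+1)^2 := by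
  rw [c_one]
  have hk : (0:ℝ) ≤ (k:ℝ) := Nat.cast_nonneg k
  rw [div_le_div_iff₀ (by positivity) (by positivity)]
  nlinarith [sq_nonneg ((k:ℝ)+1), sq_nonneg (k:ℝ), pow_pos (show (0:ℝ) < (k:ℝ)+1 by positivity) 2,
    mul_nonneg hk hk, mul_nonneg (mul_nonneg hk hk) hk, mul_nonneg (mul_nonneg (mul_nonneg hk hk) hk) hk]

/-- `G K k = H_K - H_k = ∑_{j=k+1}^K 1/j`. -/
noncomputable def Gf (K k : ℕ) : ℝ := ∑ j ∈ Finset.Icc (k+1) K, (1:ℝ)/j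

lemma Gf_nonneg (K k : ℕ) : 0 ≤ Gf K k := by
  apply Finset.sum_nonneg; intro j _; positivity

lemma Gf_self (K : ℕ) : Gf K K = 0 := by
  unfold Gf
  rw [Finset.Icc_eq_empty (by omega), Finset.sum_empty]

lemma Gf_succ {K k : ℕ} (h : k+1 ≤ K) : Gf K k = 1/((k:ℝ)+1) + Gf K (k+1) := by
  unfold Gf
  rw [← Finset.insert_Icc_add_one_left_eq_Icc h, Finset.sum_insert (by simp)]
  have : ((k:ℕ)+1+1) = k+2 := rfl
  rw [this]
  congr 1
  push_cast
  ring

/-- The dual weight `α(l,k) = lk + l(l+1)(H_K - H_k)`. -/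
noncomputable def af (K l k : ℕ) : ℝ := (l:ℝ)*(k:ℝ) + (l:ℝ)*((l:ℝ)+1)*Gf K k

/-- `κ(l,k) = (2l+k+2)α(l,k) - l·α(l+1,k)`. -/
noncomputable def kf (K l k : ℕ) : ℝ := (2*(l:ℝ)+(k:ℝ)+2) * af K l k - (l:ℝ) * af K (l+1) k

lemma af_nonneg (K l k : ℕ) : 0 ≤ af K l k := by
  unfold af
  have := Gf_nonneg K k
  positivity

/-- Key supersolution inequality: `(l+k)·α(l,k+1) ≤ κ(l,k)` for `k+1 ≤ K`, `l = t+2`. -/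
lemma key_ineq {K k : ℕ} (t : ℕ) (h : k+1 ≤ K) :
    ((t:ℝ)+2+(k:ℝ)) * af K (t+2) (k+1) ≤ kf K (t+2) k := by
  have hdiff : kf K (t+2) k - ((t:ℝ)+2+(k:ℝ)) * af K (t+2) (k+1)
      = ((t:ℝ)+2)*(((t:ℝ)+2)^2+(k:ℝ))/((k:ℝ)+1) := by
    unfold kf af
    rw [Gf_succ h]
    have hk : ((k:ℝ)+1) ≠ 0 := by positivity
    push_cast
    field_simp
    ring
  have hk : (0:ℝ) ≤ (k:ℝ) := Nat.cast_nonneg k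
  have : 0 ≤ ((t:ℝ)+2)*(((t:ℝ)+2)^2+(k:ℝ))/((k:ℝ)+1) := by positivity
  linarith

/-- Partial weighted sum `P_L(k) = ∑_{t<L} κ(t+2,k)·c(t+2,k)`. -/
noncomputable def Pp (K L k : ℕ) : ℝ := ∑ t ∈ Finset.range L, kf K (t+2) k * c (t+2) k

lemma c_rec' (t k : ℕ) : c (t+2) (k+1) * (2*(t:ℝ)+(k:ℝ)+7)
    = c (t + 2) k * ((t : ℝ) + (k : ℝ) + 2) + c (t + 1) (k + 1) * ((t : ℝ) + 1) := by
  have hd : (2*(t:ℝ)+(k:ℝ)+7) ≠ 0 := by positivity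
  rw [c_rec]
  field_simp

lemma Pp_step {K k : ℕ} (L : ℕ) (h : k+1 ≤ K) :
    Pp K L (k+1) ≤ af K 2 (k+1) * c 1 (k+1) + Pp K L k := by
  have hper : ∀ t : ℕ, kf K (t+2) (k+1) * c (t+2) (k+1)
      = af K (t+2) (k+1) * (((t:ℝ)+2+(k:ℝ)) * c (t+2) k)
        + ((((t:ℝ)+1) * af K (t+2) (k+1) * c (t+1) (k+1))
          - (((t:ℝ)+1+1) * af K (t+3) (k+1) * c (t+2) (k+1))) := by
    intro t
    have hc := c_rec' t k
    unfold kf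
    push_cast
    linear_combination af K (t+2) (k+1) * hc
  have hsum : ∀ M : ℕ, Pp K M (k+1) = (∑ t ∈ Finset.range M,
        af K (t+2) (k+1) * (((t:ℝ)+2+(k:ℝ)) * c (t+2) k))
      + ((1 * af K 2 (k+1) * c 1 (k+1)) - (((M:ℝ)+1) * af K (M+2) (k+1) * c (M+1) (k+1))) := by
    intro M
    induction M with
    | zero =>
      unfold Pp
      simp
    | succ M ihM =>
      unfold Pp at ihM ⊢
      rw [Finset.sum_range_succ, ihM, hper M, Finset.sum_range_succ]
      push_cast
      ring
  rw [hsum]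
  have h1 : (∑ t ∈ Finset.range L, af K (t+2) (k+1) * (((t:ℝ)+2+(k:ℝ)) * c (t+2) k))
      ≤ Pp K L k := by
    unfold Pp
    apply Finset.sum_le_sum
    intro t _
    have hcn := c_nonneg (t+2) k
    have := key_ineq (K := K) (k := k) t h
    calc af K (t+2) (k+1) * (((t:ℝ)+2+(k:ℝ)) * c (t+2) k)
        = (((t:ℝ)+2+(k:ℝ)) * af K (t+2) (k+1)) * c (t+2) k := by ring
      _ ≤ kf K (t+2) k * c (t+2) k := by
          apply mul_le_mul_of_nonneg_right this hcn
  have h2 : 0 ≤ ((L:ℝ)+1) * af K (L+2) (k+1) * c (L+1) (k+1) := by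
    have := af_nonneg K (L+2) (k+1)
    have := c_nonneg (L+1) (k+1)
    positivity
  have h3 : (1:ℝ) * af K 2 (k+1) * c 1 (k+1) = af K 2 (k+1) * c 1 (k+1) := by ring
  linarith

lemma Pp_bound (K L : ℕ) : ∀ k, k ≤ K →
    Pp K L k ≤ ∑ j ∈ Finset.range k, af K 2 (j+1) * c 1 (j+1) := by
  intro k
  induction k with
  | zero =>
    intro _
    unfold Pp
    simp [c_zero_right]
  | succ k ih =>
    intro hk
    have h1 := Pp_step (K := K) (k := k) L hk
    have h2 := ih (by omega)
    rw [Finset.sum_range_succ]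
    linarith

lemma log_diff {K : ℕ} (h : 1 ≤ K) : 1/((K:ℝ)+1) ≤ Real.log (K+1) - Real.log K := by
  have hK : (0:ℝ) < (K:ℝ) := by exact_mod_cast h
  have hx : (0:ℝ) < (K:ℝ)/((K:ℝ)+1) := by positivity
  have := Real.log_le_sub_one_of_pos hx
  rw [Real.log_div (by positivity) (by positivity)] at this
  have h2 : (K:ℝ)/((K:ℝ)+1) - 1 = -(1/((K:ℝ)+1)) := by field_simp; ring
  rw [h2] at this
  linarith

lemma harmonic_le : ∀ K : ℕ, ∑ j ∈ Finset.range K, 1/((j:ℝ)+1) ≤ 1 + Real.log K := by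
  intro K
  induction K with
  | zero => simp
  | succ K ih =>
    rw [Finset.sum_range_succ]
    rcases Nat.eq_zero_or_pos K with hK | hK
    · subst hK; simp
    · have := log_diff (K := K) hK
      push_cast
      push_cast at ih this
      linarith

lemma sum_Icc_le_log : ∀ K : ℕ, (∑ j ∈ Finset.Icc 2 K, (1:ℝ)/j) ≤ Real.log K := by
  intro K
  induction K with
  | zero => simp
  | succ K ih =>
    rcases Nat.lt_or_ge K 1 with hK | hK
    · interval_cases K
      · simp [Finset.Icc_eq_empty]
    · have hins : insert (K+1) (Finset.Icc 2 K) = Finset.Icc 2 (K+1) :=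
        Finset.insert_Icc_right_eq_Icc_add_one (by omega)
      rw [← hins, Finset.sum_insert (by simp)]
      have := log_diff (K := K) hK
      push_cast
      push_cast at ih this
      linarith

lemma Gf_le_log {K k : ℕ} (h : 1 ≤ k) : Gf K k ≤ Real.log K := by
  have hsub : Finset.Icc (k+1) K ⊆ Finset.Icc 2 K := by
    intro j hj
    simp only [Finset.mem_Icc] at hj ⊢
    omega
  have h1 : Gf K k ≤ ∑ j ∈ Finset.Icc 2 K, (1:ℝ)/j := by
    apply Finset.sum_le_sum_of_subset_of_nonneg hsub
    intro j _ _; positivity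
  exact h1.trans (sum_Icc_le_log K)

lemma sumsq_le : ∀ K : ℕ, ∑ j ∈ Finset.range K, 1/((j:ℝ)+1)^2 ≤ 2 - 2/((K:ℝ)+1) := by
  intro K
  induction K with
  | zero => norm_num
  | succ K ih =>
    rw [Finset.sum_range_succ]
    have hK : (0:ℝ) ≤ (K:ℝ) := Nat.cast_nonneg K
    have h1 : 1/((K:ℝ)+1)^2 ≤ 2/((K:ℝ)+1) - 2/((K:ℝ)+1+1) := by
      rw [div_sub_div _ _ (by positivity) (by positivity), div_le_div_iff₀ (by positivity) (by positivity)]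
      nlinarith
    push_cast
    push_cast at ih
    linarith

/-- `y_k = ∑_{l=2}^∞ l·c(l,k)` is a convergent series and satisfies
`0 ≤ y_k ≤ C·ln k/k²` for an absolute constant `C > 0` and all `k ≥ 2`. -/
theorem y_bound :
    ∃ C : ℝ, 0 < C ∧ ∀ k : ℕ, 2 ≤ k →
      Summable (fun l : ℕ => ((l : ℝ) + 2) * c (l + 2) k) ∧
      0 ≤ ∑' l : ℕ, ((l : ℝ) + 2) * c (l + 2) k ∧
      (∑' l : ℕ, ((l : ℝ) + 2) * c (l + 2) k) ≤ C * Real.log k / (k : ℝ) ^ 2 := by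
  refine ⟨272, by norm_num, ?_⟩
  intro K hK
  have hK0 : (0:ℝ) < (K:ℝ) := by exact_mod_cast (by omega : 0 < K)
  have hK2 : (0:ℝ) < (K:ℝ)^2 := by positivity
  have hlog2 : (2:ℝ)/3 ≤ Real.log K := by
    have h1 : Real.log 2 ≤ Real.log K := by
      apply Real.log_le_log (by norm_num)
      exact_mod_cast hK
    have := Real.log_two_gt_d9
    linarith
  have hlogpos : 0 < Real.log K := by linarith
  -- bound on the boundary sum A
  have hA : (∑ j ∈ Finset.range K, af K 2 (j+1) * c 1 (j+1)) ≤ 272 * Real.log K := by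
    have hterm : ∀ j ∈ Finset.range K, af K 2 (j+1) * c 1 (j+1)
        ≤ 32 * (1/((j:ℝ)+1)) + 96 * Real.log K * (1/((j:ℝ)+1)^2) := by
      intro j _
      have hafle : af K 2 (j+1) ≤ 2*((j:ℝ)+1) + 6 * Real.log K := by
        unfold af
        have := Gf_le_log (K := K) (k := j+1) (by omega)
        push_cast
        nlinarith [Gf_nonneg K (j+1)]
      have hcle := c_one_le j
      have hcn := c_nonneg 1 (j+1)
      have hafn := af_nonneg K 2 (j+1)
      have hj : (0:ℝ) ≤ (j:ℝ) := Nat.cast_nonneg j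
      have hmul : af K 2 (j+1) * c 1 (j+1) ≤ (2*((j:ℝ)+1) + 6 * Real.log K) * (16/((j:ℝ)+1)^2) := by
        apply mul_le_mul hafle hcle hcn
        positivity
      have heq : (2*((j:ℝ)+1) + 6 * Real.log K) * (16/((j:ℝ)+1)^2)
          = 32 * (1/((j:ℝ)+1)) + 96 * Real.log K * (1/((j:ℝ)+1)^2) := by
        field_simp
        ring
      linarith [heq ▸ hmul]
    calc (∑ j ∈ Finset.range K, af K 2 (j+1) * c 1 (j+1))
        ≤ ∑ j ∈ Finset.range K, (32 * (1/((j:ℝ)+1)) + 96 * Real.log K * (1/((j:ℝ)+1)^2)) :=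
          Finset.sum_le_sum hterm
      _ = 32 * (∑ j ∈ Finset.range K, 1/((j:ℝ)+1))
          + 96 * Real.log K * (∑ j ∈ Finset.range K, 1/((j:ℝ)+1)^2) := by
          rw [Finset.sum_add_distrib, Finset.mul_sum, Finset.mul_sum]
      _ ≤ 32 * (1 + Real.log K) + 96 * Real.log K * 2 := by
          have h1 := harmonic_le K
          have h2 : (∑ j ∈ Finset.range K, 1/((j:ℝ)+1)^2) ≤ 2 := by
            have h5 := sumsq_le K
            have h6 : (0:ℝ) ≤ 2/((K:ℝ)+1) := by positivity
            linarith
          have h3 : 0 ≤ 96 * Real.log K := by linarith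
          have h7 : 96 * Real.log K * (∑ j ∈ Finset.range K, 1/((j:ℝ)+1)^2)
              ≤ 96 * Real.log K * 2 := mul_le_mul_of_nonneg_left h2 h3
          have h8 : 32 * (∑ j ∈ Finset.range K, 1/((j:ℝ)+1))
              ≤ 32 * (1 + Real.log K) := by linarith
          linarith
      _ ≤ 272 * Real.log K := by nlinarith
  -- partial sums of the target series are bounded by A / K^2
  have hpartial : ∀ L : ℕ, (∑ t ∈ Finset.range L, ((t:ℝ)+2) * c (t+2) K)
      ≤ 272 * Real.log K / (K:ℝ)^2 := by
    intro L
    have hPp := Pp_bound K L K le_rfl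
    have hw : ∀ t ∈ Finset.range L, ((t:ℝ)+2) * c (t+2) K ≤ (kf K (t+2) K * c (t+2) K) / (K:ℝ)^2 := by
      intro t _
      have hcn := c_nonneg (t+2) K
      have hkf : ((t:ℝ)+2) * (K:ℝ)^2 ≤ kf K (t+2) K := by
        unfold kf af
        rw [Gf_self]
        have ht : (0:ℝ) ≤ (t:ℝ) := Nat.cast_nonneg t
        push_cast
        nlinarith [mul_nonneg (mul_nonneg (show (0:ℝ) ≤ (t:ℝ)+2 by linarith) hK0.le)
          (show (0:ℝ) ≤ (t:ℝ)+3 by linarith)]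
      rw [le_div_iff₀ hK2]
      calc ((t:ℝ)+2) * c (t+2) K * (K:ℝ)^2 = (((t:ℝ)+2) * (K:ℝ)^2) * c (t+2) K := by ring
        _ ≤ kf K (t+2) K * c (t+2) K := mul_le_mul_of_nonneg_right hkf hcn
    calc (∑ t ∈ Finset.range L, ((t:ℝ)+2) * c (t+2) K)
        ≤ ∑ t ∈ Finset.range L, (kf K (t+2) K * c (t+2) K) / (K:ℝ)^2 := Finset.sum_le_sum hw
      _ = Pp K L K / (K:ℝ)^2 := by rw [← Finset.sum_div]; rfl
      _ ≤ (∑ j ∈ Finset.range K, af K 2 (j+1) * c 1 (j+1)) / (K:ℝ)^2 :=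
          (div_le_div_iff_of_pos_right hK2).mpr hPp
      _ ≤ 272 * Real.log K / (K:ℝ)^2 := (div_le_div_iff_of_pos_right hK2).mpr hA
  have hnn : ∀ t : ℕ, 0 ≤ ((t:ℝ)+2) * c (t+2) K := by
    intro t
    have := c_nonneg (t+2) K
    positivity
  have hsummable : Summable (fun l : ℕ => ((l : ℝ) + 2) * c (l + 2) K) :=
    summable_of_sum_range_le hnn hpartial
  refine ⟨hsummable, tsum_nonneg hnn, Summable.tsum_le_of_sum_range_le hsummable hpartial⟩
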